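/- Let R be a random vector in R^d with E[R] = u and E[||R - u||^2] <= omega_R * ||u||^2, where u = x_tilde - x for fixed points x, x_tilde in R^d, and let x_star in R^d. Set x_plus = x + rho * R with rho = 1/(1 + omega_R). Then E[ ||x_plus - x_star||^2 ] <= (omega_R/(1 + omega_R)) * ||x - x_star||^2 + (1/(1 + omega_R)) * ||x_tilde - x_star||^2. -/

import Mathlib

open MeasureTheory

theorem stmt9 {d : ℕ} {Ω : Type*} [MeasurableSpace Ω] (μ : Measure Ω)
    [IsProbabilityMeasure μ]
    (x xtilde xstar : EuclideanSpace ℝ (Fin d))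
    (R : Ω → EuclideanSpace ℝ (Fin d)) (ωR ρ : ℝ) (hωR : 0 ≤ ωR)
    (hρ : ρ = 1 / (1 + ωR))
    (hRint : Integrable R μ)
    (hmean : ∫ a, R a ∂μ = xtilde - x)
    (hRsq : Integrable (fun a => ‖R a - (xtilde - x)‖ ^ 2) μ)
    (hvar : ∫ a, ‖R a - (xtilde - x)‖ ^ 2 ∂μ ≤ ωR * ‖xtilde - x‖ ^ 2)
    (hplussq : Integrable (fun a => ‖x + ρ • R a - xstar‖ ^ 2) μ) :
    ∫ a, ‖x + ρ • R a - xstar‖ ^ 2 ∂μ ≤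
      (ωR / (1 + ωR)) * ‖x - xstar‖ ^ 2 + (1 / (1 + ωR)) * ‖xtilde - xstar‖ ^ 2 := by
  have h1 : (0:ℝ) < 1 + ωR := by linarith
  set u : EuclideanSpace ℝ (Fin d) := xtilde - x with hu
  set A : EuclideanSpace ℝ (Fin d) := x + ρ • u - xstar with hA
  have hpt : ∀ a, ‖x + ρ • R a - xstar‖ ^ 2
      = ‖A‖ ^ 2 + 2 * (inner ℝ A (ρ • (R a - u)) : ℝ) + ρ ^ 2 * ‖R a - u‖ ^ 2 := by
    intro a
    have h2 : x + ρ • R a - xstar = A + ρ • (R a - u) := by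
      rw [hA]; module
    rw [h2, norm_add_sq_real, norm_smul, Real.norm_eq_abs, mul_pow, sq_abs]
  have hsub : Integrable (fun a => R a - u) μ := hRint.sub (integrable_const u)
  have hsmul : Integrable (fun a => ρ • (R a - u)) μ := hsub.smul ρ
  have hint1 : Integrable (fun a => (inner ℝ A (ρ • (R a - u)) : ℝ)) μ :=
    hsmul.const_inner A
  have hinner0 : ∫ a, (inner ℝ A (ρ • (R a - u)) : ℝ) ∂μ = 0 := by
    rw [integral_inner hsmul, integral_smul,
      integral_sub hRint (integrable_const u), hmean, integral_const]
    simp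
  have hsq : Integrable (fun a => ρ ^ 2 * ‖R a - u‖ ^ 2) μ := hRsq.const_mul (ρ ^ 2)
  have hkey : ∫ a, ‖x + ρ • R a - xstar‖ ^ 2 ∂μ
      = ‖A‖ ^ 2 + ρ ^ 2 * ∫ a, ‖R a - u‖ ^ 2 ∂μ := by
    calc ∫ a, ‖x + ρ • R a - xstar‖ ^ 2 ∂μ
        = ∫ a, (‖A‖ ^ 2 + 2 * (inner ℝ A (ρ • (R a - u)) : ℝ) + ρ ^ 2 * ‖R a - u‖ ^ 2) ∂μ := by
          exact integral_congr_ae (Filter.Eventually.of_forall hpt)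
      _ = (∫ a, (‖A‖ ^ 2 + 2 * (inner ℝ A (ρ • (R a - u)) : ℝ)) ∂μ)
            + ∫ a, ρ ^ 2 * ‖R a - u‖ ^ 2 ∂μ := by
          exact integral_add ((integrable_const _).add (hint1.const_mul 2)) hsq
      _ = ((∫ _, ‖A‖ ^ 2 ∂μ) + ∫ a, 2 * (inner ℝ A (ρ • (R a - u)) : ℝ) ∂μ)
            + ∫ a, ρ ^ 2 * ‖R a - u‖ ^ 2 ∂μ := by
          rw [integral_add (integrable_const _) (hint1.const_mul 2)]
      _ = ‖A‖ ^ 2 + ρ ^ 2 * ∫ a, ‖R a - u‖ ^ 2 ∂μ := by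
          rw [integral_const_mul, hinner0, integral_const_mul, integral_const]
          simp
  rw [hkey]
  have hvar' : ρ ^ 2 * ∫ a, ‖R a - u‖ ^ 2 ∂μ ≤ ρ ^ 2 * (ωR * ‖u‖ ^ 2) :=
    mul_le_mul_of_nonneg_left hvar (sq_nonneg ρ)
  have hρ' : ρ * (1 + ωR) = 1 := by rw [hρ]; field_simp
  have hρω : ρ ^ 2 * ωR = ρ - ρ ^ 2 := by nlinarith [hρ']
  have hvar'' : ρ ^ 2 * ∫ a, ‖R a - u‖ ^ 2 ∂μ ≤ (ρ - ρ ^ 2) * ‖u‖ ^ 2 := by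
    calc ρ ^ 2 * ∫ a, ‖R a - u‖ ^ 2 ∂μ ≤ ρ ^ 2 * (ωR * ‖u‖ ^ 2) := hvar'
      _ = (ρ - ρ ^ 2) * ‖u‖ ^ 2 := by rw [← mul_assoc, hρω]
  have hexp : ‖A‖ ^ 2 = ‖x - xstar‖ ^ 2 + 2 * ρ * (inner ℝ (x - xstar) u : ℝ) + ρ ^ 2 * ‖u‖ ^ 2 := by
    have h3 : A = (x - xstar) + ρ • u := by rw [hA]; abel
    rw [h3, norm_add_sq_real, norm_smul, Real.norm_eq_abs, mul_pow, sq_abs,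
      real_inner_smul_right]
    ring
  have hexp2 : ‖xtilde - xstar‖ ^ 2 = ‖x - xstar‖ ^ 2 + 2 * (inner ℝ (x - xstar) u : ℝ) + ‖u‖ ^ 2 := by
    have h4 : xtilde - xstar = (x - xstar) + u := by rw [hu]; abel
    rw [h4, norm_add_sq_real]
  have hωdiv : ωR / (1 + ωR) = 1 - ρ := by rw [hρ]; field_simp; ring
  have h1div : (1 : ℝ) / (1 + ωR) = ρ := hρ.symm
  rw [hexp, hexp2, hωdiv, h1div]
  nlinarith [hvar'']
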